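/- Fix α > 1. For every source class (p_θ)_{θ∈Θ} on 𝒳^ℓ, the minimax batch α-regret is bounded below by the conditional Sibson capacity: min over batch predictors p̂ of sup_{θ∈Θ} R_α(p̂,θ) ≥ sup over prior probability measures w on Θ of I_α^w(θ,Y|X^n). -/

import Mathlib

open MeasureTheory Real Filter

/-- `q` is a probability mass function on the finite type `B`. -/
def IsPMF {B : Type*} [Fintype B] (q : B → ℝ) : Prop :=
  (∀ y, 0 ≤ q y) ∧ ∑ y, q y = 1

/-- Probability of a tuple of `n` i.i.d. batches: `p_θ(x^n) = ∏ i, p_θ(x_i)`. -/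
def prodP {Θ B : Type*} (p : Θ → B → ℝ) (n : ℕ) (θ : Θ) (x : Fin n → B) : ℝ :=
  ∏ i, p θ (x i)

/-- The batch `α`-regret
`R_α(p̂,θ) = (1/(α-1)) log ( Σ_{x^n} p_θ(x^n) Σ_y p_θ(y) (p_θ(y)/p̂(y|x^n))^(α-1) )`. -/
noncomputable def alphaRegret {Θ B : Type*} [Fintype B] (α : ℝ) (p : Θ → B → ℝ) (n : ℕ)
    (phat : (Fin n → B) → B → ℝ) (θ : Θ) : ℝ :=
  (α - 1)⁻¹ * Real.log (∑ x : Fin n → B, prodP p n θ x *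
    ∑ y : B, p θ y * (p θ y / phat x y) ^ (α - 1))

/-- The conditional Rényi divergence `D_α(Y ‖ Ŷ | θ, X^n)` under the joint law
`w(dθ) p_θ(x^n) p_θ(y)`. -/
noncomputable def condRenyiDiv {Θ B : Type*} [MeasurableSpace Θ] [Fintype B] (α : ℝ)
    (p : Θ → B → ℝ) (n : ℕ) (w : Measure Θ) (phat : (Fin n → B) → B → ℝ) : ℝ :=
  (α - 1)⁻¹ * Real.log (∫ θ, (∑ x : Fin n → B, prodP p n θ x *
    ∑ y : B, p θ y * (p θ y / phat x y) ^ (α - 1)) ∂w)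

/-- The conditional Sibson mutual information
`I_α^w(θ,Y|X^n) = (1/(α-1)) log Σ_{x^n} { Σ_y ( ∫ p_θ(x^n) p_θ(y)^α w(dθ) )^(1/α) }^α`. -/
noncomputable def sibsonMI {Θ B : Type*} [MeasurableSpace Θ] [Fintype B] (α : ℝ)
    (p : Θ → B → ℝ) (n : ℕ) (w : Measure Θ) : ℝ :=
  (α - 1)⁻¹ * Real.log (∑ x : Fin n → B,
    (∑ y : B, (∫ θ, prodP p n θ x * p θ y ^ α ∂w) ^ α⁻¹) ^ α)

/-- Integral of `g` against the posterior `w(dθ|x^n) = w(dθ) p_θ(x^n) / ∫ p_θ'(x^n) w(dθ')`. -/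
noncomputable def posteriorInt {Θ B : Type*} [MeasurableSpace Θ] (p : Θ → B → ℝ) (n : ℕ)
    (w : Measure Θ) (x : Fin n → B) (g : Θ → ℝ) : ℝ :=
  (∫ θ, prodP p n θ x * g θ ∂w) / (∫ θ, prodP p n θ x ∂w)

/-- The conditional `α`-NML predictor
`p̂_α(y|x^n) = ( ∫ p_θ(y)^α w(dθ|x^n) )^(1/α) / Σ_y' ( ∫ p_θ(y')^α w(dθ|x^n) )^(1/α)`. -/
noncomputable def alphaNML {Θ B : Type*} [MeasurableSpace Θ] [Fintype B] (α : ℝ)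
    (p : Θ → B → ℝ) (n : ℕ) (w : Measure Θ) (x : Fin n → B) (y : B) : ℝ :=
  (posteriorInt p n w x fun θ => p θ y ^ α) ^ α⁻¹ /
    ∑ y' : B, (posteriorInt p n w x fun θ => p θ y' ^ α) ^ α⁻¹

lemma aux_sum_prodP {Θ B : Type*} [Fintype B] (p : Θ → B → ℝ) (n : ℕ) (θ : Θ)
    (h : ∑ y, p θ y = 1) : ∑ x : Fin n → B, prodP p n θ x = 1 := by
  unfold prodP
  rw [← Fintype.prod_sum]
  simp [h]

lemma aux_jensen {B : Type*} [Fintype B] {α : ℝ} (hα : 1 < α) (A q : B → ℝ)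
    (hA : ∀ y, 0 ≤ A y) (hq : ∀ y, 0 < q y) (hq1 : ∑ y, q y = 1) :
    (∑ y, A y ^ α⁻¹) ^ α ≤ ∑ y, A y / q y ^ (α - 1) := by
  have hαpos : (0:ℝ) < α := lt_trans one_pos hα
  have key := Real.rpow_arith_mean_le_arith_mean_rpow Finset.univ q (fun y => A y ^ α⁻¹ / q y)
    (fun y _ => (hq y).le) hq1 (fun y _ => div_nonneg (Real.rpow_nonneg (hA y) _) (hq y).le) hα.le
  calc (∑ y, A y ^ α⁻¹) ^ α
      = (∑ y, q y * (A y ^ α⁻¹ / q y)) ^ α := by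
        congr 1
        exact Finset.sum_congr rfl fun y _ => by rw [mul_div_assoc'] ; exact (mul_div_cancel_left₀ _ (hq y).ne').symm
    _ ≤ ∑ y, q y * (A y ^ α⁻¹ / q y) ^ α := key
    _ = ∑ y, A y / q y ^ (α - 1) := Finset.sum_congr rfl fun y _ => by
        have h2 : (A y ^ α⁻¹ / q y) ^ α = A y / q y ^ α := by
          rw [Real.div_rpow (Real.rpow_nonneg (hA y) _) (hq y).le, ← Real.rpow_mul (hA y),
            inv_mul_cancel₀ hαpos.ne', Real.rpow_one]
        have h3 := Real.rpow_add (hq y) 1 (α - 1)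
        rw [Real.rpow_one] at h3
        have h4 : (1:ℝ) + (α - 1) = α := by ring
        rw [h4] at h3
        rw [h2, h3]
        have hne : q y ^ (α - 1) ≠ 0 := (Real.rpow_pos_of_pos (hq y) _).ne'
        field_simp
        exact mul_div_cancel_left₀ (A y) (hq y).ne'

lemma aux_final {X B : Type*} [Fintype X] [Fintype B] {α C : ℝ} (hα : 1 < α)
    (A : X → B → ℝ) (q : X → B → ℝ) (hA : ∀ x y, 0 ≤ A x y) (hq : ∀ x y, 0 < q x y)
    (hq1 : ∀ x, ∑ y, q x y = 1) (hApos : ∃ x y, 0 < A x y)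
    (hT : ∑ x, ∑ y, A x y / q x y ^ (α - 1) ≤ Real.exp ((α - 1) * C)) :
    (α - 1)⁻¹ * Real.log (∑ x, (∑ y, A x y ^ α⁻¹) ^ α) ≤ C := by
  have hα1 : (0:ℝ) < α - 1 := by linarith
  have hαpos : (0:ℝ) < α := by linarith
  set S : ℝ := ∑ x, (∑ y, A x y ^ α⁻¹) ^ α with hS
  have hJ : ∀ x, (∑ y, A x y ^ α⁻¹) ^ α ≤ ∑ y, A x y / q x y ^ (α - 1) := fun x =>
    aux_jensen hα (fun y => A x y) (fun y => q x y) (hA x) (hq x) (hq1 x)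
  have hSle : S ≤ Real.exp ((α - 1) * C) :=
    le_trans (Finset.sum_le_sum fun x _ => hJ x) hT
  obtain ⟨x₀, y₀, hxy⟩ := hApos
  have hS0 : 0 < S := by
    have h1 : 0 < ∑ y, A x₀ y ^ α⁻¹ :=
      lt_of_lt_of_le (Real.rpow_pos_of_pos hxy _)
        (Finset.single_le_sum (fun y _ => Real.rpow_nonneg (hA x₀ y) _) (Finset.mem_univ y₀))
    exact lt_of_lt_of_le (Real.rpow_pos_of_pos h1 α)
      (Finset.single_le_sum
        (fun x _ => Real.rpow_nonneg (Finset.sum_nonneg fun y _ => Real.rpow_nonneg (hA x y) _) _)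
        (Finset.mem_univ x₀))
  have hlogS : Real.log S ≤ (α - 1) * C := (Real.log_le_iff_le_exp hS0).2 hSle
  calc (α - 1)⁻¹ * Real.log S ≤ (α - 1)⁻¹ * ((α - 1) * C) :=
        mul_le_mul_of_nonneg_left hlogS (inv_nonneg.2 hα1.le)
    _ = C := by field_simp

/-- For `α > 1`, the minimax batch `α`-regret is bounded below by the
conditional Sibson capacity: for every (everywhere positive) batch predictor `p̂` and every
prior probability measure `w`, `sup_{θ∈Θ} R_α(p̂,θ) ≥ I_α^w(θ,Y|X^n)` (stated via upper
bounds: any upper bound `C` of `θ ↦ R_α(p̂,θ)` satisfies `C ≥ I_α^w(θ,Y|X^n)`). -/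
theorem minimax_alphaRegret_ge_sibson_capacity
    {𝒳 Θ : Type*} [Fintype 𝒳] [Nonempty 𝒳] [MeasurableSpace Θ]
    (ℓ n : ℕ) (hℓ : 0 < ℓ) (hn : 0 < n) (α : ℝ) (hα : 1 < α)
    (p : Θ → (Fin ℓ → 𝒳) → ℝ)
    (hp : ∀ θ, IsPMF (p θ))
    (hmeas : ∀ z : Fin ℓ → 𝒳, Measurable fun θ => p θ z)
    (phat : (Fin n → Fin ℓ → 𝒳) → (Fin ℓ → 𝒳) → ℝ)
    (hphat : ∀ x, IsPMF (phat x))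
    (hpos : ∀ x y, 0 < phat x y)
    (w : Measure Θ) [IsProbabilityMeasure w]
    (C : ℝ) (hC : ∀ θ : Θ, alphaRegret α p n phat θ ≤ C) :
    sibsonMI α p n w ≤ C := by
  classical
  have hα1 : (0:ℝ) < α - 1 := by linarith
  have hαpos : (0:ℝ) < α := by linarith
  have hp0 : ∀ θ y, 0 ≤ p θ y := fun θ => (hp θ).1
  have hp1 : ∀ θ, ∑ y, p θ y = 1 := fun θ => (hp θ).2
  have hple1 : ∀ θ y, p θ y ≤ 1 := fun θ y =>
    (Finset.single_le_sum (fun i _ => hp0 θ i) (Finset.mem_univ y)).trans_eq (hp1 θ)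
  have hprod0 : ∀ θ x, 0 ≤ prodP p n θ x := fun θ x =>
    Finset.prod_nonneg fun i _ => hp0 θ (x i)
  have hprod1 : ∀ θ x, prodP p n θ x ≤ 1 := fun θ x =>
    Finset.prod_le_one (fun i _ => hp0 θ (x i)) (fun i _ => hple1 θ (x i))
  -- key pointwise identity
  have hkey : ∀ θ (x : Fin n → Fin ℓ → 𝒳) y,
      p θ y * (p θ y / phat x y) ^ (α - 1) = p θ y ^ α / phat x y ^ (α - 1) := by
    intro θ x y
    rw [Real.div_rpow (hp0 θ y) (hpos x y).le]
    rcases eq_or_lt_of_le (hp0 θ y) with h | h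
    · rw [← h, Real.zero_rpow hα1.ne', Real.zero_rpow hαpos.ne', zero_mul, zero_div]
    · have hmul : p θ y * p θ y ^ (α - 1) = p θ y ^ α := by
        nth_rewrite 1 [← Real.rpow_one (p θ y)]
        rw [← Real.rpow_add h]
        norm_num
      rw [mul_div_assoc', hmul]
  -- measurability
  have hmprod : ∀ x : Fin n → Fin ℓ → 𝒳, Measurable fun θ => prodP p n θ x := fun x =>
    Finset.measurable_prod _ fun i _ => hmeas (x i)
  have hmpα : ∀ y, Measurable fun θ => p θ y ^ α := fun y =>
    (Real.continuous_rpow_const hαpos.le).measurable.comp (hmeas y)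
  -- integrability of each product term
  have hint : ∀ (x : Fin n → Fin ℓ → 𝒳) y,
      Integrable (fun θ => prodP p n θ x * p θ y ^ α) w := by
    intro x y
    refine (integrable_const (1:ℝ)).mono' ((hmprod x).mul (hmpα y)).aestronglyMeasurable ?_
    refine Eventually.of_forall fun θ => ?_
    rw [Real.norm_eq_abs,
      abs_of_nonneg (mul_nonneg (hprod0 θ x) (Real.rpow_nonneg (hp0 θ y) _))]
    exact mul_le_one₀ (hprod1 θ x) (Real.rpow_nonneg (hp0 θ y) _)
      (Real.rpow_le_one (hp0 θ y) (hple1 θ y) hαpos.le)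
  -- apply the core lemma
  refine aux_final hα (fun x y => ∫ θ, prodP p n θ x * p θ y ^ α ∂w) phat
    (fun x y => integral_nonneg fun θ =>
      mul_nonneg (hprod0 θ x) (Real.rpow_nonneg (hp0 θ y) _))
    hpos (fun x => (hphat x).2) ?_ ?_
  · -- positivity : ∃ x y, 0 < ∫ ...
    by_contra hcon
    push_neg at hcon
    have hz : ∀ (x : Fin n → Fin ℓ → 𝒳) y, (∫ θ, prodP p n θ x * p θ y ^ α ∂w) = 0 :=
      fun x y => le_antisymm (hcon x y)
        (integral_nonneg fun θ => mul_nonneg (hprod0 θ x) (Real.rpow_nonneg (hp0 θ y) _))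
    have hsum0 : ∑ x : Fin n → Fin ℓ → 𝒳, ∑ y, (∫ θ, prodP p n θ x * p θ y ^ α ∂w) = 0 := by
      simp [hz]
    have hintpy : ∀ y, Integrable (fun θ => p θ y ^ α) w := by
      intro y
      refine (integrable_const (1:ℝ)).mono' (hmpα y).aestronglyMeasurable ?_
      refine Eventually.of_forall fun θ => ?_
      rw [Real.norm_eq_abs, abs_of_nonneg (Real.rpow_nonneg (hp0 θ y) _)]
      exact Real.rpow_le_one (hp0 θ y) (hple1 θ y) hαpos.le
    have hsum_eq : ∑ x : Fin n → Fin ℓ → 𝒳, ∑ y, (∫ θ, prodP p n θ x * p θ y ^ α ∂w)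
        = ∫ θ, (∑ y, p θ y ^ α) ∂w := by
      calc ∑ x : Fin n → Fin ℓ → 𝒳, ∑ y, (∫ θ, prodP p n θ x * p θ y ^ α ∂w)
          = ∑ x : Fin n → Fin ℓ → 𝒳, ∫ θ, (∑ y, prodP p n θ x * p θ y ^ α) ∂w :=
            Finset.sum_congr rfl fun x _ => (integral_finset_sum _ fun y _ => hint x y).symm
        _ = ∫ θ, (∑ x : Fin n → Fin ℓ → 𝒳, ∑ y, prodP p n θ x * p θ y ^ α) ∂w :=
            (integral_finset_sum _ fun x _ => integrable_finset_sum _ fun y _ => hint x y).symm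
        _ = ∫ θ, (∑ y, p θ y ^ α) ∂w := by
            congr 1
            funext θ
            rw [← Finset.sum_mul_sum]
            rw [aux_sum_prodP p n θ (hp1 θ), one_mul]
    set c : ℝ := ((Fintype.card (Fin ℓ → 𝒳) : ℝ))⁻¹ ^ α with hc
    have hcard : (0:ℝ) < (Fintype.card (Fin ℓ → 𝒳) : ℝ) := by
      exact_mod_cast Fintype.card_pos
    have hcpos : 0 < c := Real.rpow_pos_of_pos (inv_pos.2 hcard) _
    have hlb : ∀ θ, c ≤ ∑ y, p θ y ^ α := by
      intro θ
      obtain ⟨y₀, hy₀⟩ : ∃ y, ((Fintype.card (Fin ℓ → 𝒳) : ℝ))⁻¹ ≤ p θ y := by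
        by_contra hcon2
        push_neg at hcon2
        have hlt := Finset.sum_lt_sum_of_nonempty Finset.univ_nonempty
          (fun y _ => hcon2 y)
        rw [hp1 θ, Finset.sum_const, nsmul_eq_mul, Finset.card_univ, mul_inv_cancel₀ hcard.ne'] at hlt
        exact lt_irrefl 1 hlt
      calc c ≤ p θ y₀ ^ α := Real.rpow_le_rpow (inv_pos.2 hcard).le hy₀ hαpos.le
        _ ≤ ∑ y, p θ y ^ α :=
          Finset.single_le_sum (fun y _ => Real.rpow_nonneg (hp0 θ y) _) (Finset.mem_univ y₀)
    have hge : c ≤ ∫ θ, (∑ y, p θ y ^ α) ∂w := by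
      have h1 : (∫ _θ, c ∂w) = c := by simp
      rw [← h1]
      exact integral_mono (integrable_const _) (integrable_finset_sum _ fun y _ => hintpy y)
        hlb
    rw [hsum_eq] at hsum0
    rw [hsum0] at hge
    exact absurd hge (not_le.2 hcpos)
  · -- the regret bound : ∑ x ∑ y (∫ ...) / phat ^ (α-1) ≤ exp ((α-1) C)
    have hFle : ∀ θ, (∑ x : Fin n → Fin ℓ → 𝒳, prodP p n θ x *
        ∑ y, p θ y * (p θ y / phat x y) ^ (α - 1)) ≤ Real.exp ((α - 1) * C) := by
      intro θ
      have h := hC θ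
      unfold alphaRegret at h
      have hlog : Real.log (∑ x : Fin n → Fin ℓ → 𝒳, prodP p n θ x *
          ∑ y, p θ y * (p θ y / phat x y) ^ (α - 1)) ≤ (α - 1) * C := by
        have h2 := mul_le_mul_of_nonneg_left h hα1.le
        rwa [← mul_assoc, mul_inv_cancel₀ hα1.ne', one_mul] at h2
      exact le_trans (Real.le_exp_log _) (Real.exp_le_exp.2 hlog)
    have hform : ∀ θ, (∑ x : Fin n → Fin ℓ → 𝒳, prodP p n θ x *
        ∑ y, p θ y * (p θ y / phat x y) ^ (α - 1))
        = ∑ x : Fin n → Fin ℓ → 𝒳, ∑ y,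
            (prodP p n θ x * p θ y ^ α) / phat x y ^ (α - 1) := by
      intro θ
      refine Finset.sum_congr rfl fun x _ => ?_
      rw [Finset.mul_sum]
      refine Finset.sum_congr rfl fun y _ => ?_
      rw [hkey θ x y, mul_div_assoc]
    have hintdiv : ∀ (x : Fin n → Fin ℓ → 𝒳) y,
        Integrable (fun θ => (prodP p n θ x * p θ y ^ α) / phat x y ^ (α - 1)) w :=
      fun x y => (hint x y).div_const _
    calc ∑ x : Fin n → Fin ℓ → 𝒳, ∑ y,
          (∫ θ, prodP p n θ x * p θ y ^ α ∂w) / phat x y ^ (α - 1)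
        = ∑ x : Fin n → Fin ℓ → 𝒳, ∑ y,
            ∫ θ, (prodP p n θ x * p θ y ^ α) / phat x y ^ (α - 1) ∂w := by
          refine Finset.sum_congr rfl fun x _ => Finset.sum_congr rfl fun y _ => ?_
          rw [integral_div]
      _ = ∫ θ, (∑ x : Fin n → Fin ℓ → 𝒳, ∑ y,
            (prodP p n θ x * p θ y ^ α) / phat x y ^ (α - 1)) ∂w := by
          rw [integral_finset_sum _ fun x _ => integrable_finset_sum _ fun y _ => hintdiv x y]
          exact Finset.sum_congr rfl fun x _ =>
            (integral_finset_sum _ fun y _ => hintdiv x y).symm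
      _ = ∫ θ, (∑ x : Fin n → Fin ℓ → 𝒳, prodP p n θ x *
            ∑ y, p θ y * (p θ y / phat x y) ^ (α - 1)) ∂w := by
          congr 1
          funext θ
          exact (hform θ).symm
      _ ≤ ∫ _θ, Real.exp ((α - 1) * C) ∂w := by
          refine integral_mono ?_ (integrable_const _) hFle
          refine integrable_finset_sum _ fun x _ => ?_
          have : (fun θ => prodP p n θ x * ∑ y, p θ y * (p θ y / phat x y) ^ (α - 1))
              = fun θ => ∑ y, (prodP p n θ x * p θ y ^ α) / phat x y ^ (α - 1) := by
            funext θ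
            rw [Finset.mul_sum]
            exact Finset.sum_congr rfl fun y _ => by rw [hkey θ x y, mul_div_assoc]
          rw [this]
          exact integrable_finset_sum _ fun y _ => hintdiv x y
      _ = Real.exp ((α - 1) * C) := by simp
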